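/- Let T be a tree, τ a generalized threshold function, V_f = {u : τ(u) > deg(u)}, and v a saturated vertex (τ(v) = deg(v)) not in H_τ(V_f). If every neighbor of v is saturated or in V_f with the property that v has no non-saturated neighbor outside H_τ(V_f), then the maximum activation time of v over all target sets is 1; in particular, V(T) \ {v} is a target set activating v at time 1. -/
import Mathlib


namespace TSS

variable {V : Type*}

/-- The interval (one activation step): `S` together with all vertices having
at least `τ v` neighbors in `S`. -/
def interval (G : SimpleGraph V) (τ : V → ℕ) (S : Set V) : Set V :=
  S ∪ {v | τ v ≤ (G.neighborSet v ∩ S).ncard}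

/-- `S` is a target set if iterating the interval operator reaches all of `V`. -/
def IsTargetSet (G : SimpleGraph V) (τ : V → ℕ) (S : Set V) : Prop :=
  ∃ t : ℕ, (interval G τ)^[t] S = Set.univ

/-- The activation time of a set: least `t` with `I^[t+1] S = I^[t] S`. -/
noncomputable def actTime (G : SimpleGraph V) (τ : V → ℕ) (S : Set V) : ℕ :=
  sInf {t : ℕ | (interval G τ)^[t + 1] S = (interval G τ)^[t] S}

/-- The maximum activation time over all target sets. -/
noncomputable def maxTime (G : SimpleGraph V) (τ : V → ℕ) : ℕ :=
  sSup {t : ℕ | ∃ S : Set V, IsTargetSet G τ S ∧ actTime G τ S = t}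

/-- The activation time of a vertex `v` for an initial set `S`. -/
noncomputable def vTime (G : SimpleGraph V) (τ : V → ℕ) (S : Set V) (v : V) : ℕ :=
  sInf {k : ℕ | v ∈ (interval G τ)^[k] S}

/-- The set of vertices eventually activated from `S`. -/
def hull (G : SimpleGraph V) (τ : V → ℕ) (S : Set V) : Set V :=
  {v | ∃ k : ℕ, v ∈ (interval G τ)^[k] S}

end TSS

open TSS

section Aux

variable {V : Type*} [Fintype V] (G : SimpleGraph V) (τ : V → ℕ)

lemma subset_interval (S : Set V) : S ⊆ interval G τ S := Set.subset_union_left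

lemma sat_nbrs {v : V} (hsat : τ v = (G.neighborSet v).ncard) {S : Set V}
    (hmem : v ∈ interval G τ S) (hnot : v ∉ S) : G.neighborSet v ⊆ S := by
  rcases hmem with h | h
  · exact absurd h hnot
  · simp only [Set.mem_setOf_eq] at h
    have hsub : G.neighborSet v ∩ S ⊆ G.neighborSet v := Set.inter_subset_left
    have hle : (G.neighborSet v).ncard ≤ (G.neighborSet v ∩ S).ncard := hsat ▸ h
    have heq := Set.eq_of_subset_of_ncard_le hsub hle
    intro u hu
    rw [← heq] at hu
    exact hu.2

lemma vf_mem {u : V} (hvf : (G.neighborSet u).ncard < τ u) {S : Set V} :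
    ∀ k, u ∈ (interval G τ)^[k] S → u ∈ S := by
  intro k
  induction k with
  | zero => exact id
  | succ n ih =>
    rw [Function.iterate_succ_apply']
    intro h
    rcases h with h | h
    · exact ih h
    · exfalso
      simp only [Set.mem_setOf_eq] at h
      have : (G.neighborSet u ∩ (interval G τ)^[n] S).ncard ≤ (G.neighborSet u).ncard :=
        Set.ncard_le_ncard Set.inter_subset_left (Set.toFinite _)
      omega

lemma vtime_le_one {v : V} (hsat : τ v = (G.neighborSet v).ncard)
    (hnb : ∀ u ∈ G.neighborSet v,
      τ u = (G.neighborSet u).ncard ∨ (G.neighborSet u).ncard < τ u)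
    {S₀ : Set V} (hTS : IsTargetSet G τ S₀) : vTime G τ S₀ v ≤ 1 := by
  obtain ⟨t, ht⟩ := hTS
  have hmemt : ∀ w : V, w ∈ (interval G τ)^[t] S₀ := by rw [ht]; exact fun w => trivial
  have hPne : v ∈ (interval G τ)^[t] S₀ := hmemt v
  show sInf {k : ℕ | v ∈ (interval G τ)^[k] S₀} ≤ 1
  have hk := Nat.sInf_mem (⟨t, hPne⟩ : {k : ℕ | v ∈ (interval G τ)^[k] S₀}.Nonempty)
  rcases Nat.eq_zero_or_pos (sInf {k : ℕ | v ∈ (interval G τ)^[k] S₀}) with h0 | hpos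
  · omega
  · obtain ⟨m, hm⟩ : ∃ m, sInf {k : ℕ | v ∈ (interval G τ)^[k] S₀} = m + 1 :=
      ⟨sInf {k : ℕ | v ∈ (interval G τ)^[k] S₀} - 1, by omega⟩
    have hv1 : v ∈ (interval G τ)^[m + 1] S₀ := by rw [← hm]; exact hk
    have hv0 : v ∉ (interval G τ)^[m] S₀ := by
      intro h
      have := Nat.sInf_le (show m ∈ {k : ℕ | v ∈ (interval G τ)^[k] S₀} from h)
      omega
    have hNv : G.neighborSet v ⊆ (interval G τ)^[m] S₀ := by
      rw [Function.iterate_succ_apply'] at hv1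
      exact sat_nbrs G τ hsat hv1 hv0
    have hNvS : G.neighborSet v ⊆ S₀ := by
      intro u hu
      rcases hnb u hu with husat | hvf
      · by_contra huS
        have huQne : ({k : ℕ | u ∈ (interval G τ)^[k] S₀}).Nonempty := ⟨t, hmemt u⟩
        have hjmem := Nat.sInf_mem huQne
        have hjle : sInf {k : ℕ | u ∈ (interval G τ)^[k] S₀} ≤ m :=
          Nat.sInf_le (hNv hu)
        have hjpos : 0 < sInf {k : ℕ | u ∈ (interval G τ)^[k] S₀} := by
          rcases Nat.eq_zero_or_pos (sInf {k : ℕ | u ∈ (interval G τ)^[k] S₀}) with h | h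
          · rw [h] at hjmem; exact absurd hjmem huS
          · exact h
        obtain ⟨i, hi⟩ : ∃ i, sInf {k : ℕ | u ∈ (interval G τ)^[k] S₀} = i + 1 :=
          ⟨sInf {k : ℕ | u ∈ (interval G τ)^[k] S₀} - 1, by omega⟩
        have hu1 : u ∈ (interval G τ)^[i + 1] S₀ := by rw [← hi]; exact hjmem
        have hu0 : u ∉ (interval G τ)^[i] S₀ := by
          intro h
          have := Nat.sInf_le (show i ∈ {k : ℕ | u ∈ (interval G τ)^[k] S₀} from h)
          omega
        rw [Function.iterate_succ_apply'] at hu1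
        have hNu := sat_nbrs G τ husat hu1 hu0
        have hvmem : v ∈ (interval G τ)^[i] S₀ :=
          hNu (by simpa [SimpleGraph.mem_neighborSet] using G.adj_symm hu)
        have := Nat.sInf_le (show i ∈ {k : ℕ | v ∈ (interval G τ)^[k] S₀} from hvmem)
        omega
      · exact vf_mem G τ hvf t (hmemt u)
    have h1 : v ∈ (interval G τ)^[1] S₀ := by
      rw [Function.iterate_one]
      right
      simp only [Set.mem_setOf_eq]
      rw [hsat, Set.inter_eq_left.mpr hNvS]
    exact Nat.sInf_le h1

end Aux

/-- in a tree, a saturated vertex v outside H(V_f) all of whose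
neighbors are saturated or in V_f (in particular, with no non-saturated neighbor
outside H(V_f)) has maximum activation time 1; in particular V(T) \ {v} is a
target set activating v at time 1. -/
theorem stmt12 {V : Type*} [Fintype V] (G : SimpleGraph V) (hT : G.IsTree)
    (τ : V → ℕ) (v : V)
    (hsat : τ v = (G.neighborSet v).ncard)
    (hv : v ∉ TSS.hull G τ {u : V | (G.neighborSet u).ncard < τ u})
    (hnb : ∀ u ∈ G.neighborSet v,
      τ u = (G.neighborSet u).ncard ∨ (G.neighborSet u).ncard < τ u)
    (hnb' : ∀ u ∈ G.neighborSet v,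
      ¬(τ u < (G.neighborSet u).ncard ∧
        u ∉ TSS.hull G τ {u : V | (G.neighborSet u).ncard < τ u})) :
    sSup {k : ℕ | ∃ S₀ : Set V, TSS.IsTargetSet G τ S₀ ∧ TSS.vTime G τ S₀ v = k} = 1 ∧
    TSS.IsTargetSet G τ (Set.univ \ {v}) ∧
    TSS.vTime G τ (Set.univ \ {v}) v = 1 := by
  have hNsub : G.neighborSet v ⊆ Set.univ \ {v} := by
    intro u hu
    refine ⟨trivial, fun h => ?_⟩
    simp only [Set.mem_singleton_iff] at h
    subst h
    exact G.irrefl hu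
  have hvmem1 : v ∈ interval G τ (Set.univ \ {v}) := by
    right
    simp only [Set.mem_setOf_eq]
    rw [hsat, Set.inter_eq_left.mpr hNsub]
  have hIu : interval G τ (Set.univ \ {v}) = Set.univ := by
    apply Set.eq_univ_of_forall
    intro w
    by_cases hw : w = v
    · subst hw; exact hvmem1
    · exact subset_interval G τ _ ⟨trivial, by simpa using hw⟩
  have hTS : TSS.IsTargetSet G τ (Set.univ \ {v}) := ⟨1, by rw [Function.iterate_one, hIu]⟩
  have hvT : TSS.vTime G τ (Set.univ \ {v}) v = 1 := by
    have h1 : v ∈ (interval G τ)^[1] (Set.univ \ {v}) := by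
      rw [Function.iterate_one]; exact hvmem1
    have h0 : v ∉ (interval G τ)^[0] (Set.univ \ {v}) := by
      simp
    have hle : TSS.vTime G τ (Set.univ \ {v}) v ≤ 1 := Nat.sInf_le h1
    have hmem := Nat.sInf_mem
      (⟨1, h1⟩ : {k : ℕ | v ∈ (interval G τ)^[k] (Set.univ \ {v})}.Nonempty)
    have hne : TSS.vTime G τ (Set.univ \ {v}) v ≠ 0 := by
      intro h
      unfold TSS.vTime at h
      rw [h] at hmem
      exact h0 hmem
    unfold TSS.vTime at hle hne ⊢
    omega
  refine ⟨?_, hTS, hvT⟩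
  have hbound : ∀ k ∈ {k : ℕ | ∃ S₀ : Set V, TSS.IsTargetSet G τ S₀ ∧ TSS.vTime G τ S₀ v = k},
      k ≤ 1 := by
    rintro k ⟨S₀, hS₀, rfl⟩
    exact vtime_le_one G τ hsat hnb hS₀
  have hmem1 : (1 : ℕ) ∈ {k : ℕ | ∃ S₀ : Set V, TSS.IsTargetSet G τ S₀ ∧ TSS.vTime G τ S₀ v = k} :=
    ⟨Set.univ \ {v}, hTS, hvT⟩
  exact le_antisymm (csSup_le ⟨1, hmem1⟩ hbound) (le_csSup ⟨1, hbound⟩ hmem1)
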